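/- Let R be a left noetherian ring, (F_i)_{i∈I} a family of flat right R-modules, and M a left R-module. Then the natural map (∏_i F_i) ⊗_R M → ∏_i (F_i ⊗_R M) is injective. -/

import Mathlib

open TensorProduct

noncomputable section

section NCTensor

variable (R : Type u) [Ring R]

/-- The subgroup of `F ⊗[ℤ] M` by which one divides to obtain the tensor
product `F ⊗[R] M` of a right `R`-module `F` and a left `R`-module `M`. -/
def balancedRel (F : Type u) [AddCommGroup F] [Module Rᵐᵒᵖ F]
    (M : Type u) [AddCommGroup M] [Module R M] : Submodule ℤ (F ⊗[ℤ] M) :=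
  Submodule.span ℤ {x | ∃ (r : R) (f : F) (m : M),
    x = (MulOpposite.op r • f) ⊗ₜ[ℤ] m - f ⊗ₜ[ℤ] (r • m)}

/-- The tensor product `F ⊗[R] M` (an abelian group) of a right `R`-module `F`
and a left `R`-module `M` over a possibly noncommutative ring `R`. -/
def NCTensor (F : Type u) [AddCommGroup F] [Module Rᵐᵒᵖ F]
    (M : Type u) [AddCommGroup M] [Module R M] : Type u :=
  (F ⊗[ℤ] M) ⧸ balancedRel R F M

instance (F : Type u) [AddCommGroup F] [Module Rᵐᵒᵖ F]
    (M : Type u) [AddCommGroup M] [Module R M] : AddCommGroup (NCTensor R F M) :=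
  inferInstanceAs (AddCommGroup ((F ⊗[ℤ] M) ⧸ balancedRel R F M))

variable {R}

/-- The elementary tensor `f ⊗ m` in `NCTensor R F M`. -/
def NCTensor.mk {F : Type u} [AddCommGroup F] [Module Rᵐᵒᵖ F]
    {M : Type u} [AddCommGroup M] [Module R M] (f : F) (m : M) : NCTensor R F M :=
  Submodule.Quotient.mk (f ⊗ₜ[ℤ] m)

/-- Functoriality of `NCTensor` in the left-module variable: `1 ⊗ g`. -/
def NCTensor.mapRight {F : Type u} [AddCommGroup F] [Module Rᵐᵒᵖ F]
    {M M' : Type u} [AddCommGroup M] [Module R M] [AddCommGroup M'] [Module R M']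
    (g : M →ₗ[R] M') : NCTensor R F M →+ NCTensor R F M' :=
  (Submodule.mapQ (balancedRel R F M) (balancedRel R F M')
    (LinearMap.lTensor F (g.restrictScalars ℤ))
    (by
      rw [balancedRel, Submodule.span_le]
      rintro x ⟨r, f, m, rfl⟩
      simp only [SetLike.mem_coe, Submodule.mem_comap, map_sub,
        LinearMap.lTensor_tmul, LinearMap.coe_restrictScalars]
      exact Submodule.subset_span ⟨r, f, g m, by
        erw [map_sub, LinearMap.lTensor_tmul, LinearMap.lTensor_tmul]
        simp [g.map_smul]⟩)).toAddMonoidHom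

/-- Functoriality of `NCTensor` in the right-module variable: `e ⊗ 1`. -/
def NCTensor.mapLeft {F F' : Type u} [AddCommGroup F] [Module Rᵐᵒᵖ F]
    [AddCommGroup F'] [Module Rᵐᵒᵖ F']
    {M : Type u} [AddCommGroup M] [Module R M]
    (e : F →ₗ[Rᵐᵒᵖ] F') : NCTensor R F M →+ NCTensor R F' M :=
  (Submodule.mapQ (balancedRel R F M) (balancedRel R F' M)
    (LinearMap.rTensor M (e.restrictScalars ℤ))
    (by
      rw [balancedRel, Submodule.span_le]
      rintro x ⟨r, f, m, rfl⟩
      simp only [SetLike.mem_coe, Submodule.mem_comap, map_sub,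
        LinearMap.rTensor_tmul, LinearMap.coe_restrictScalars]
      exact Submodule.subset_span ⟨r, e f, m, by
        erw [map_sub, LinearMap.rTensor_tmul, LinearMap.rTensor_tmul]
        simp [e.map_smul]⟩)).toAddMonoidHom

variable (R) in
/-- A right `R`-module `F` is flat if tensoring with `F` preserves injectivity
of maps of left `R`-modules (equivalently, `F ⊗[R] –` is exact). -/
def RightModuleFlat (F : Type u) [AddCommGroup F] [Module Rᵐᵒᵖ F] : Prop :=
  ∀ (M M' : Type u) [AddCommGroup M] [Module R M] [AddCommGroup M'] [Module R M']
    (g : M →ₗ[R] M'), Function.Injective g → Function.Injective (NCTensor.mapRight (F := F) g)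

end NCTensor

/-- The natural map `(∏ i, F i) ⊗[R] M → ∏ i, (F i ⊗[R] M)`,
sending `(f_i)_i ⊗ m` to `(f_i ⊗ m)_i`. -/
def piTensorCompare (R : Type u) [Ring R] (ι : Type u) (F : ι → Type u)
    [∀ i, AddCommGroup (F i)] [∀ i, Module Rᵐᵒᵖ (F i)]
    (M : Type u) [AddCommGroup M] [Module R M] :
    NCTensor R (∀ i, F i) M →+ ∀ i, NCTensor R (F i) M :=
  (Submodule.liftQ (balancedRel R (∀ i, F i) M)
    (LinearMap.pi fun i => (balancedRel R (F i) M).mkQ ∘ₗ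
      LinearMap.rTensor M (LinearMap.proj (R := ℤ) (φ := F) i))
    (by
      rw [balancedRel, Submodule.span_le]
      rintro x ⟨r, f, m, rfl⟩
      refine LinearMap.mem_ker.2 (funext fun i => ?_)
      have h : (MulOpposite.op r • f i) ⊗ₜ[ℤ] m - (f i) ⊗ₜ[ℤ] (r • m) ∈
          balancedRel R (F i) M := Submodule.subset_span ⟨r, f i, m, rfl⟩
      erw [LinearMap.pi_apply, LinearMap.comp_apply, map_sub, LinearMap.rTensor_tmul,
        LinearMap.rTensor_tmul]
      simpa [map_sub, LinearMap.rTensor_tmul, Submodule.Quotient.mk_eq_zero]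
        using (Submodule.Quotient.mk_eq_zero _).2 h)).toAddMonoidHom

section Aux

namespace NCTensor

variable {R : Type u} [Ring R]
variable {F : Type u} [AddCommGroup F] [Module Rᵐᵒᵖ F]
variable {M M' : Type u} [AddCommGroup M] [Module R M] [AddCommGroup M'] [Module R M']

lemma mk_add_left (f f' : F) (m : M) :
    mk (R := R) (f + f') m = mk f m + mk f' m := by
  show Submodule.Quotient.mk _ = _
  rw [TensorProduct.add_tmul]
  rfl

lemma mk_add_right (f : F) (m m' : M) :
    mk (R := R) f (m + m') = mk f m + mk f m' := by
  show Submodule.Quotient.mk _ = _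
  rw [TensorProduct.tmul_add]
  rfl

lemma mk_zero_left (m : M) : mk (R := R) (0 : F) m = 0 := by
  show Submodule.Quotient.mk _ = _
  rw [TensorProduct.zero_tmul]
  rfl

lemma mk_zero_right (f : F) : mk (R := R) f (0 : M) = 0 := by
  show Submodule.Quotient.mk _ = _
  rw [TensorProduct.tmul_zero]
  rfl

lemma mk_rel (r : R) (f : F) (m : M) :
    mk (R := R) (MulOpposite.op r • f) m = mk f (r • m) := by
  have h : (MulOpposite.op r • f) ⊗ₜ[ℤ] m - f ⊗ₜ[ℤ] (r • m) ∈ balancedRel R F M :=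
    Submodule.subset_span ⟨r, f, m, rfl⟩
  have := (Submodule.Quotient.mk_eq_zero _).2 h
  rw [Submodule.Quotient.mk_sub] at this
  exact sub_eq_zero.1 this

lemma induction_on {P : NCTensor R F M → Prop} (x : NCTensor R F M)
    (zero : P 0) (tmul : ∀ f m, P (mk f m))
    (add : ∀ a b, P a → P b → P (a + b)) : P x := by
  obtain ⟨t, rfl⟩ := Submodule.Quotient.mk_surjective _ x
  induction t using TensorProduct.induction_on with
  | zero => exact zero
  | tmul f m => exact tmul f m
  | add a b ha hb => rw [Submodule.Quotient.mk_add]; exact add _ _ ha hb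

lemma mapRight_mk (g : M →ₗ[R] M') (f : F) (m : M) :
    mapRight (F := F) g (mk f m) = mk f (g m) := by
  simp only [mapRight, mk, LinearMap.toAddMonoidHom_coe, Submodule.mapQ_apply]
  rfl

lemma mapRight_comp_apply {M'' : Type u} [AddCommGroup M''] [Module R M'']
    (g : M →ₗ[R] M') (g' : M' →ₗ[R] M'') (x : NCTensor R F M) :
    mapRight (F := F) (g' ∘ₗ g) x = mapRight g' (mapRight g x) := by
  induction x using induction_on with
  | zero => simp
  | tmul f m => simp [mapRight_mk]
  | add a b ha hb => simp [map_add, ha, hb]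

lemma mapRight_zero_apply (x : NCTensor R F M) :
    mapRight (F := F) (0 : M →ₗ[R] M') x = 0 := by
  induction x using induction_on with
  | zero => simp
  | tmul f m => simp [mapRight_mk, mk_zero_right]
  | add a b ha hb => simp [map_add, ha, hb]

lemma mapRight_surjective (g : M →ₗ[R] M') (hg : Function.Surjective g) :
    Function.Surjective (mapRight (F := F) g) := by
  intro x
  induction x using induction_on with
  | zero => exact ⟨0, map_zero _⟩
  | tmul f m =>
    obtain ⟨p, rfl⟩ := hg m
    exact ⟨mk f p, mapRight_mk _ _ _⟩
  | add a b ha hb =>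
    obtain ⟨y, rfl⟩ := ha
    obtain ⟨z, rfl⟩ := hb
    exact ⟨y + z, map_add _ _ _⟩

end NCTensor

end Aux
section Aux2

namespace NCTensor

variable {R : Type u} [Ring R]
variable {F : Type u} [AddCommGroup F] [Module Rᵐᵒᵖ F]
variable {M M' : Type u} [AddCommGroup M] [Module R M] [AddCommGroup M'] [Module R M']

/-- Lift a balanced biadditive map to `NCTensor`. -/
def liftAdd {A : Type v} [AddCommGroup A] (b : F →+ M →+ A)
    (hb : ∀ (r : R) (f : F) (m : M), b (MulOpposite.op r • f) m = b f (r • m)) :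
    NCTensor R F M →+ A :=
  (Submodule.liftQ (balancedRel R F M)
    (TensorProduct.lift
      { toFun := fun f => (b f).toIntLinearMap
        map_add' := fun f f' => by ext m; simp
        map_smul' := fun z f => by ext m; simp [map_zsmul] })
    (by
      rw [balancedRel, Submodule.span_le]
      rintro x ⟨r, f, m, rfl⟩
      refine LinearMap.mem_ker.2 ?_
      erw [map_sub, TensorProduct.lift.tmul, TensorProduct.lift.tmul]
      simp [hb])).toAddMonoidHom

lemma liftAdd_mk {A : Type v} [AddCommGroup A] (b : F →+ M →+ A)
    (hb : ∀ (r : R) (f : F) (m : M), b (MulOpposite.op r • f) m = b f (r • m))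
    (f : F) (m : M) : liftAdd b hb (mk f m) = b f m := by
  simp only [liftAdd, mk, LinearMap.toAddMonoidHom_coe, Submodule.liftQ_apply]
  rfl

variable (R F) in
/-- The comparison `NCTensor R F (Fin n → R) →+ (Fin n → F)`. -/
def phiFree (n : ℕ) : NCTensor R F (Fin n → R) →+ (Fin n → F) :=
  liftAdd
    { toFun := fun f =>
        { toFun := fun m => fun j => MulOpposite.op (m j) • f
          map_zero' := by ext j; simp
          map_add' := fun m m' => by ext j; simp [add_smul] }
      map_zero' := by ext m j; simp
      map_add' := fun f f' => by ext m j; simp [smul_add] }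
    (by
      intro r f m
      ext j
      simp only [AddMonoidHom.coe_mk, ZeroHom.coe_mk]
      rw [smul_smul]
      congr 1)

lemma phiFree_mk (n : ℕ) (f : F) (m : Fin n → R) :
    phiFree R F n (mk (R := R) f m) = fun j => MulOpposite.op (m j) • f :=
  liftAdd_mk _ _ _ _

variable (R F) in
/-- Inverse-ish of `phiFree`. -/
def psiFree (n : ℕ) (v : Fin n → F) : NCTensor R F (Fin n → R) :=
  ∑ j, mk (v j) (Pi.single j (1 : R))

lemma psiFree_add (n : ℕ) (v w : Fin n → F) :
    psiFree R F n (v + w) = psiFree R F n v + psiFree R F n w := by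
  simp [psiFree, mk_add_left, Finset.sum_add_distrib]

lemma psiFree_phiFree (n : ℕ) (x : NCTensor R F (Fin n → R)) :
    psiFree R F n (phiFree R F n x) = x := by
  induction x using induction_on with
  | zero => simp [psiFree, mk_zero_left]
  | tmul f m =>
    rw [phiFree_mk]
    simp only [psiFree, mk_rel]
    have h1 : ∀ j : Fin n, m j • (Pi.single j (1 : R) : Fin n → R) = Pi.single j (m j) := by
      intro j
      ext k
      simp [Pi.single_apply, Pi.smul_apply, mul_ite]
    simp only [h1]
    have h2 : ∑ j, mk (R := R) f (Pi.single j (m j)) = mk f (∑ j, Pi.single j (m j)) := by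
      induction (Finset.univ : Finset (Fin n)) using Finset.induction_on with
      | empty => simp [mk_zero_right]
      | insert hj ih => simp_all [mk_add_right]
    rw [h2, Finset.univ_sum_single]
  | add a b ha hb => rw [map_add, psiFree_add, ha, hb]

lemma phiFree_injective (n : ℕ) :
    Function.Injective (phiFree R F n) := by
  intro x y h
  rw [← psiFree_phiFree n x, ← psiFree_phiFree n y, h]

end NCTensor

end Aux2
section Aux3

namespace NCTensor

variable {R : Type u} [Ring R]
variable {F : Type u} [AddCommGroup F] [Module Rᵐᵒᵖ F]
variable {M M' : Type u} [AddCommGroup M] [Module R M] [AddCommGroup M'] [Module R M']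

lemma mk_sub_right (f : F) (a b : M) :
    mk (R := R) f (a - b) = mk f a - mk f b := by
  rw [eq_sub_iff_add_eq, ← mk_add_right, sub_add_cancel]

/-- Exactness of `F ⊗ –` in the middle: anything killed by `1 ⊗ g` (for `g`
surjective) comes from the kernel of `g`. -/
lemma exact_mapRight (g : M →ₗ[R] M') (hg : Function.Surjective g)
    (y : NCTensor R F M) (hy : mapRight (F := F) g y = 0) :
    y ∈ AddMonoidHom.range (mapRight (F := F) (LinearMap.ker g).subtype) := by
  set G := AddMonoidHom.range (mapRight (F := F) (LinearMap.ker g).subtype) with hG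
  let q : NCTensor R F M →+ NCTensor R F M ⧸ G := QuotientAddGroup.mk' G
  have hker : ∀ (f : F) (p : M), g p = 0 → q (mk f p) = 0 := by
    intro f p hp
    refine (QuotientAddGroup.eq_zero_iff _).2 ?_
    exact ⟨mk f ⟨p, LinearMap.mem_ker.2 hp⟩, mapRight_mk _ _ _⟩
  have hcong : ∀ (f : F) (a b : M), g a = g b → q (mk f a) = q (mk f b) := by
    intro f a b h
    have h0 : q (mk f (a - b)) = 0 := hker f _ (by simp [map_sub, h])
    rw [mk_sub_right, map_sub, sub_eq_zero] at h0
    exact h0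
  let s : M' → M := Function.surjInv hg
  have hs : ∀ m', g (s m') = m' := Function.surjInv_eq hg
  let b : F →+ M' →+ NCTensor R F M ⧸ G :=
    { toFun := fun f =>
        { toFun := fun m' => q (mk f (s m'))
          map_zero' := hker f _ (by rw [hs])
          map_add' := fun a c => by
            rw [← map_add, ← mk_add_right]
            exact hcong f _ _ (by rw [hs, map_add, hs, hs]) }
      map_zero' := by ext m'; simp [mk_zero_left]
      map_add' := fun f f' => by ext m'; simp [mk_add_left, map_add] }
  have hbal : ∀ (r : R) (f : F) (m' : M'), b (MulOpposite.op r • f) m' = b f (r • m') := by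
    intro r f m'
    show q (mk (MulOpposite.op r • f) (s m')) = q (mk f (s (r • m')))
    rw [mk_rel]
    exact hcong f _ _ (by rw [map_smul, hs, hs])
  have key : ∀ x : NCTensor R F M, liftAdd b hbal (mapRight (F := F) g x) = q x := by
    intro x
    induction x using induction_on with
    | zero => simp
    | tmul f m =>
      rw [mapRight_mk, liftAdd_mk]
      exact hcong f _ _ (hs _)
    | add a c ha hc => rw [map_add, map_add, map_add, ha, hc]
  have h0 := key y
  rw [hy, map_zero] at h0
  exact (QuotientAddGroup.eq_zero_iff _).1 h0.symm

end NCTensor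

section Compare

variable {R : Type u} [Ring R] {ι : Type u} {F : ι → Type u}
  [∀ i, AddCommGroup (F i)] [∀ i, Module Rᵐᵒᵖ (F i)]
  {M M' : Type u} [AddCommGroup M] [Module R M] [AddCommGroup M'] [Module R M']

lemma piTensorCompare_mk (f : ∀ i, F i) (m : M) (i : ι) :
    piTensorCompare R ι F M (NCTensor.mk f m) i = NCTensor.mk (f i) m := by
  simp only [piTensorCompare, NCTensor.mk, LinearMap.toAddMonoidHom_coe,
    Submodule.liftQ_apply]
  rfl

lemma piTensorCompare_naturality (g : M →ₗ[R] M') (x : NCTensor R (∀ i, F i) M) (i : ι) :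
    piTensorCompare R ι F M' (NCTensor.mapRight g x) i
      = NCTensor.mapRight g (piTensorCompare R ι F M x i) := by
  induction x using NCTensor.induction_on with
  | zero => simp
  | tmul f m => rw [NCTensor.mapRight_mk, piTensorCompare_mk, piTensorCompare_mk,
      NCTensor.mapRight_mk]
  | add a c ha hc => simp only [map_add, Pi.add_apply, ha, hc]

lemma piTensorCompare_injective_free (n : ℕ) :
    Function.Injective (piTensorCompare R ι F (Fin n → R)) := by
  have hcomm : ∀ (x : NCTensor R (∀ i, F i) (Fin n → R)) (j : Fin n) (i : ι),
      NCTensor.phiFree R (∀ i, F i) n x j i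
        = NCTensor.phiFree R (F i) n (piTensorCompare R ι F _ x i) j := by
    intro x
    induction x using NCTensor.induction_on with
    | zero => simp
    | tmul f m =>
      intro j i
      rw [NCTensor.phiFree_mk, piTensorCompare_mk, NCTensor.phiFree_mk]
      rfl
    | add a c ha hc => intro j i; simp only [map_add, Pi.add_apply, ha, hc]
  intro x y h
  apply NCTensor.phiFree_injective (F := ∀ i, F i) n
  funext j
  funext i
  rw [hcomm x j i, hcomm y j i, h]

end Compare

end Aux3
section Aux4

variable {R : Type u} [Ring R]

/-- The linear map `(Fin n → R) → N` given by `c ↦ ∑ c j • s j`. -/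
def finCombo {N : Type u} [AddCommGroup N] [Module R N] {n : ℕ} (s : Fin n → N) :
    (Fin n → R) →ₗ[R] N where
  toFun c := ∑ j, c j • s j
  map_add' c d := by simp [add_smul, Finset.sum_add_distrib]
  map_smul' r c := by simp [mul_smul, Finset.smul_sum]

lemma exists_fin_surjective (N : Type u) [AddCommGroup N] [Module R N] [Module.Finite R N] :
    ∃ (n : ℕ) (π : (Fin n → R) →ₗ[R] N), Function.Surjective π := by
  obtain ⟨n, s, hs⟩ := Module.Finite.exists_fin (R := R) (M := N)
  refine ⟨n, finCombo s, fun y => ?_⟩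
  have hle : Submodule.span R (Set.range s) ≤ LinearMap.range (finCombo (R := R) s) := by
    rw [Submodule.span_le]
    rintro _ ⟨j, rfl⟩
    refine ⟨Pi.single j 1, ?_⟩
    simp [finCombo, Pi.single_apply, ite_smul]
  exact hle (hs ▸ Submodule.mem_top)

lemma piTensorCompare_injective_of_finite [IsNoetherianRing R]
    (ι : Type u) (F : ι → Type u) [∀ i, AddCommGroup (F i)] [∀ i, Module Rᵐᵒᵖ (F i)]
    (N : Type u) [AddCommGroup N] [Module R N] [Module.Finite R N] :
    Function.Injective (piTensorCompare R ι F N) := by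
  obtain ⟨n, π, hπ⟩ := exists_fin_surjective (R := R) N
  set K := LinearMap.ker π with hK
  haveI : Module.Finite R K := Module.Finite.iff_fg.2 (IsNoetherian.noetherian K)
  obtain ⟨m, ρ, hρ⟩ := exists_fin_surjective (R := R) K
  rw [injective_iff_map_eq_zero]
  intro x' hx'
  obtain ⟨y, rfl⟩ := NCTensor.mapRight_surjective π hπ x'
  have hc : ∀ i, NCTensor.mapRight π (piTensorCompare R ι F _ y i) = 0 := by
    intro i
    rw [← piTensorCompare_naturality, hx']
    rfl
  have hz : ∀ i, ∃ w : NCTensor R (F i) (Fin m → R),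
      NCTensor.mapRight K.subtype (NCTensor.mapRight ρ w) = piTensorCompare R ι F _ y i := by
    intro i
    obtain ⟨z, hz⟩ := NCTensor.exact_mapRight π hπ _ (hc i)
    obtain ⟨w, rfl⟩ := NCTensor.mapRight_surjective ρ hρ z
    exact ⟨w, hz⟩
  choose w hw using hz
  let V : Fin m → ∀ i, F i := fun j i => NCTensor.phiFree R (F i) m (w i) j
  set W : NCTensor R (∀ i, F i) (Fin m → R) := NCTensor.psiFree R (∀ i, F i) m V with hWdef
  have hWc : ∀ i, piTensorCompare R ι F _ W i = w i := by
    intro i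
    have h1 : piTensorCompare R ι F _ W i
        = NCTensor.psiFree R (F i) m (fun j => V j i) := by
      rw [hWdef, NCTensor.psiFree, map_sum]
      rw [Finset.sum_apply]
      simp only [piTensorCompare_mk]
      rfl
    rw [h1]
    have : (fun j => V j i) = NCTensor.phiFree R (F i) m (w i) := rfl
    rw [this, NCTensor.psiFree_phiFree]
  have hu : NCTensor.mapRight (K.subtype ∘ₗ ρ) W = y := by
    apply piTensorCompare_injective_free (n := n)
    funext i
    rw [piTensorCompare_naturality, hWc i, NCTensor.mapRight_comp_apply, hw i]
  rw [← hu, ← NCTensor.mapRight_comp_apply]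
  have hzero : π ∘ₗ (K.subtype ∘ₗ ρ) = (0 : (Fin m → R) →ₗ[R] N) := by
    refine LinearMap.ext fun c => ?_
    exact (ρ c).2
  rw [hzero, NCTensor.mapRight_zero_apply]

end Aux4
/-- If `R` is left noetherian, `(F i)` a family of flat right `R`-modules and
`M` a left `R`-module, then the natural map
`(∏ i, F i) ⊗[R] M → ∏ i, (F i ⊗[R] M)` is injective. -/
theorem stmt_8 (R : Type u) [Ring R] [IsNoetherianRing R]
    (ι : Type u) (F : ι → Type u) [∀ i, AddCommGroup (F i)] [∀ i, Module Rᵐᵒᵖ (F i)]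
    (hF : ∀ i, RightModuleFlat R (F i))
    (M : Type u) [AddCommGroup M] [Module R M] :
    Function.Injective (piTensorCompare R ι F M) := by
  rw [injective_iff_map_eq_zero]
  intro x hx
  obtain ⟨t, rfl⟩ := Submodule.Quotient.mk_surjective _ x
  obtain ⟨S, rfl⟩ := TensorProduct.exists_finset t
  set N : Submodule R M := Submodule.span R (Prod.snd '' (S : Set ((∀ i, F i) × M))) with hN
  haveI : Module.Finite R N :=
    Module.Finite.iff_fg.2 (Submodule.fg_span (S.finite_toSet.image _))
  set x' : NCTensor R (∀ i, F i) N :=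
    ∑ p ∈ S.attach,
      NCTensor.mk p.1.1 ⟨p.1.2, Submodule.subset_span ⟨p.1, p.2, rfl⟩⟩ with hx'def
  have hmap : NCTensor.mapRight N.subtype x'
      = Submodule.Quotient.mk (∑ p ∈ S, p.1 ⊗ₜ[ℤ] p.2) := by
    rw [hx'def, map_sum]
    simp only [NCTensor.mapRight_mk]
    rw [← Submodule.mkQ_apply, map_sum]
    rw [← Finset.sum_attach S (fun p => (balancedRel R (∀ i, F i) M).mkQ (p.1 ⊗ₜ[ℤ] p.2))]
    rfl
  have h0 : ∀ i, piTensorCompare R ι F N x' i = 0 := by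
    intro i
    have hnat := piTensorCompare_naturality (F := F) N.subtype x' i
    rw [hmap, hx] at hnat
    refine hF i N M N.subtype N.injective_subtype ?_
    rw [map_zero, ← hnat]
    rfl
  have hx0 : x' = 0 :=
    (injective_iff_map_eq_zero _).1
      (piTensorCompare_injective_of_finite ι F N) x' (funext h0)
  rw [← hmap, hx0, map_zero]

end
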